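/- Let Γ_1 be a chordal graph on [n] = {1,…,n} such that 1,…,n is a perfect elimination order of Γ_1, and let Γ_2 be a chordal graph on {n+1,…,n+m} such that n+1,…,n+m is a perfect elimination order of Γ_2. Suppose that for every k ≥ 0 both HS_k(I(Γ_1^c)) ⊆ K[x_1,…,x_n] and HS_k(I(Γ_2^c)) ⊆ K[x_{n+1},…,x_{n+m}] have linear quotients. Let Γ be the disjoint union of Γ_1 and Γ_2 (vertex set [n+m], edge set E(Γ_1) ∪ E(Γ_2)) and set G = Γ^c. Then 1,2,…,n+m is a perfect elimination order of Γ = G^c and, for every k ≥ 0, the ideal HS_k(I(G)) ⊆ K[x_1,…,x_{n+m}] has linear quotients. -/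

import Mathlib

open MvPolynomial

/-- An ideal of `K[x_1,…,x_n]` is *generated by variables* if it is the span of the
image of a subset of the variables. -/
def genByVars {K : Type*} [Field K] {n : ℕ} (I : Ideal (MvPolynomial (Fin n) K)) : Prop :=
  ∃ T : Set (Fin n), I = Ideal.span (MvPolynomial.X '' T)
/-- A polynomial is a monomial (with coefficient `1`). -/
def IsMonomialElt {K : Type*} [Field K] {n : ℕ} (p : MvPolynomial (Fin n) K) : Prop :=
  ∃ a : Fin n →₀ ℕ, p = MvPolynomial.monomial a 1
/-- A monomial ideal has *linear quotients* if its minimal monomial generators admit an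
ordering `u 0, u 1, …` such that each colon ideal `(u_0,…,u_{i-1}) : u_i` is generated by a
subset of the variables.  (The conditions that the `u i` are monomials, pairwise
non-dividing, and generate `I` say exactly that they are the minimal monomial generators
of `I`.) -/
def HasLinearQuotients {K : Type*} [Field K] {n : ℕ}
    (I : Ideal (MvPolynomial (Fin n) K)) : Prop :=
  ∃ (m : ℕ) (u : Fin m → MvPolynomial (Fin n) K),
    (∀ i, IsMonomialElt (u i)) ∧
    (∀ i j, i ≠ j → ¬ u i ∣ u j) ∧
    Ideal.span (Set.range u) = I ∧
    ∀ i : Fin m,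
      genByVars ((Ideal.span (u '' {j | j < i})).colon (Ideal.span {u i}))
/-- The natural ordering `1, 2, …, n` of the vertices is a perfect elimination order of
`H`: for each vertex, its neighbourhood among the later vertices is a clique. -/
def natPEO {n : ℕ} (H : SimpleGraph (Fin n)) : Prop :=
  ∀ i j k : Fin n, i < j → i < k → j ≠ k → H.Adj i j → H.Adj i k → H.Adj j k

/-- The reversed ordering `n, n-1, …, 1` of the vertices is a perfect elimination order of
`H`: for each vertex, its neighbourhood among the earlier-labelled vertices is a clique. -/
def revPEO {n : ℕ} (H : SimpleGraph (Fin n)) : Prop :=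
  ∀ i j k : Fin n, j < i → k < i → j ≠ k → H.Adj i j → H.Adj i k → H.Adj j k
/-- The generating monomials of the `k`-th homological shift ideal `HS_k(I(G))`:
all monomials `x_A x_B` with `A, B` nonempty, `max A < min B`, `|A ∪ B| = k + 2` and
`{max A, b} ∈ E(G)` for all `b ∈ B`. -/
def HSgens (K : Type*) [Field K] {n : ℕ} (G : SimpleGraph (Fin n)) (k : ℕ) :
    Set (MvPolynomial (Fin n) K) :=
  {w | ∃ A B : Finset (Fin n), A.Nonempty ∧ B.Nonempty ∧
    (∀ a ∈ A, ∀ b ∈ B, a < b) ∧ (A ∪ B).card = k + 2 ∧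
    (∃ a0 ∈ A, (∀ a ∈ A, a ≤ a0) ∧ ∀ b ∈ B, G.Adj a0 b) ∧
    w = (∏ i ∈ A, MvPolynomial.X i) * ∏ i ∈ B, MvPolynomial.X i}
/-- A graph is *chordal* if it has no induced cycle of length greater than three,
i.e. every cycle of length at least four has a chord. -/
def IsChordal {V : Type*} (G : SimpleGraph V) : Prop :=
  ∀ m : ℕ, 4 ≤ m → ∀ f : ZMod m → V, Function.Injective f →
    (∀ i, G.Adj (f i) (f (i + 1))) →
      ∃ i j : ZMod m, G.Adj (f i) (f j) ∧ i ≠ j ∧ i + 1 ≠ j ∧ j + 1 ≠ i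
/-- The disjoint union of a graph `Γ₁` on `[n]` (encoded as `Fin n`, embedded in
`Fin (n+m)` via `Fin.castAdd`) and a graph `Γ₂` on `{n+1,…,n+m}` (encoded as `Fin m`,
embedded via `Fin.natAdd`). -/
def disjUnionGraph {n m : ℕ} (Γ₁ : SimpleGraph (Fin n)) (Γ₂ : SimpleGraph (Fin m)) :
    SimpleGraph (Fin (n + m)) where
  Adj u v := (∃ a b : Fin n, Γ₁.Adj a b ∧ u = Fin.castAdd m a ∧ v = Fin.castAdd m b) ∨
    (∃ a b : Fin m, Γ₂.Adj a b ∧ u = Fin.natAdd n a ∧ v = Fin.natAdd n b)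
  symm := by
    constructor
    intro u v h
    rcases h with ⟨a, b, hab, hu, hv⟩ | ⟨a, b, hab, hu, hv⟩
    · exact Or.inl ⟨b, a, hab.symm, hv, hu⟩
    · exact Or.inr ⟨b, a, hab.symm, hv, hu⟩
  loopless := by
    constructor
    intro u h
    rcases h with ⟨a, b, hab, hu, hv⟩ | ⟨a, b, hab, hu, hv⟩
    · refine hab.ne ?_
      have : (a : ℕ) = (b : ℕ) := by
        have := hu.symm.trans hv
        simpa [Fin.ext_iff] using this
      exact Fin.ext this
    · refine hab.ne ?_
      have : n + (a : ℕ) = n + (b : ℕ) := by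
        have := hu.symm.trans hv
        simpa [Fin.ext_iff] using this
      exact Fin.ext (by omega)

namespace LQAux

variable {K : Type*} [Field K] {P : ℕ}

noncomputable def ind {P : ℕ} (S : Finset (Fin P)) : Fin P →₀ ℕ := ∑ i ∈ S, Finsupp.single i 1

lemma ind_apply (S : Finset (Fin P)) (v : Fin P) : ind S v = if v ∈ S then 1 else 0 := by
  classical
  simp only [ind, Finsupp.finset_sum_apply, Finsupp.single_apply]
  rw [Finset.sum_ite_eq' S v (fun _ => 1)]

lemma ind_apply_mem {S : Finset (Fin P)} {v : Fin P} (h : v ∈ S) : ind S v = 1 := by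
  simp [ind_apply, h]

lemma ind_apply_not_mem {S : Finset (Fin P)} {v : Fin P} (h : v ∉ S) : ind S v = 0 := by
  simp [ind_apply, h]

lemma ind_le_iff {S T : Finset (Fin P)} : ind S ≤ ind T ↔ S ⊆ T := by
  constructor
  · intro h v hv
    have := h v
    rw [ind_apply, ind_apply, if_pos hv] at this
    by_contra hvT
    rw [if_neg hvT] at this; omega
  · intro h v
    rw [ind_apply, ind_apply]
    by_cases hv : v ∈ S
    · simp [hv, h hv]
    · simp [hv]

lemma ind_inj {S T : Finset (Fin P)} (h : ind S = ind T) : S = T := by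
  apply Finset.Subset.antisymm <;> rw [← ind_le_iff] <;> simp [h, le_refl]

lemma ind_insert {S : Finset (Fin P)} {v : Fin P} (h : v ∉ S) :
    ind (insert v S) = Finsupp.single v 1 + ind S := by
  simp [ind, Finset.sum_insert h]

lemma ind_union {S T : Finset (Fin P)} (h : Disjoint S T) :
    ind (S ∪ T) = ind S + ind T := by
  simp [ind, Finset.sum_union h]

lemma prod_X_eq (S : Finset (Fin P)) :
    (∏ i ∈ S, X i : MvPolynomial (Fin P) K) = monomial (ind S) 1 := by
  classical
  induction S using Finset.induction with
  | empty => simp [ind]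
  | insert _ _ h ih =>
      rw [Finset.prod_insert h, ih, ind_insert h, X, monomial_mul, one_mul]

lemma monomial_dvd_of_le {a b : Fin P →₀ ℕ} (h : a ≤ b) :
    (monomial a 1 : MvPolynomial (Fin P) K) ∣ monomial b 1 := by
  refine ⟨monomial (b - a) 1, ?_⟩
  rw [monomial_mul, one_mul, add_tsub_cancel_of_le h]

lemma support_monomial_one (a : Fin P →₀ ℕ) :
    (monomial a (1:K)).support = {a} := by
  classical
  rw [support_monomial, if_neg one_ne_zero]

lemma mem_span_monomial_image {s : Set (Fin P →₀ ℕ)} {b : Fin P →₀ ℕ}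
    (h : ∃ a ∈ s, a ≤ b) :
    (monomial b 1 : MvPolynomial (Fin P) K) ∈
      Ideal.span ((fun a => monomial a (1:K)) '' s) := by
  rw [mem_ideal_span_monomial_image]
  intro xi hxi
  rw [support_monomial_one, Finset.mem_singleton] at hxi
  subst hxi; exact h

lemma monomial_mem_span_iff {s : Set (Fin P →₀ ℕ)} {b : Fin P →₀ ℕ} :
    (monomial b 1 : MvPolynomial (Fin P) K) ∈
      Ideal.span ((fun a => monomial a (1:K)) '' s) ↔ ∃ a ∈ s, a ≤ b := by
  rw [mem_ideal_span_monomial_image]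
  constructor
  · intro h; exact h b (by rw [support_monomial_one]; exact Finset.mem_singleton_self b)
  · intro h xi hxi
    rw [support_monomial_one, Finset.mem_singleton] at hxi
    subst hxi; exact h

end LQAux

namespace LQAux
variable {K : Type*} [Field K] {P : ℕ}

lemma X_eq_monomial (v : Fin P) : (X v : MvPolynomial (Fin P) K) = monomial (Finsupp.single v 1) 1 := rfl

lemma hasLQ_of_list (d : ℕ) (L : List (Finset (Fin P))) (hnd : L.Nodup)
    (hcard : ∀ S ∈ L, S.card = d)
    (hex : ∀ i j : Fin L.length, j < i → ∃ v, v ∈ L.get j ∧ v ∉ L.get i ∧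
      ∃ j' : Fin L.length, j' < i ∧ L.get j' ⊆ insert v (L.get i)) :
    HasLinearQuotients (Ideal.span ((fun S => monomial (ind S) (1:K)) '' {S | S ∈ L})) := by
  classical
  refine ⟨L.length, fun i => monomial (ind (L.get i)) 1, fun i => ⟨_, rfl⟩, ?_, ?_, ?_⟩
  · -- pairwise non-dividing
    intro i j hij hdvd
    rw [monomial_dvd_monomial] at hdvd
    rcases hdvd with ⟨h1 | h1, -⟩
    · exact one_ne_zero h1
    · have hsub : L.get i ⊆ L.get j := ind_le_iff.mp h1
      have hcard' : (L.get j).card ≤ (L.get i).card := by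
        rw [hcard _ (L.get_mem _), hcard _ (L.get_mem _)]
      have : L.get i = L.get j := Finset.eq_of_subset_of_card_le hsub hcard'
      exact hij (hnd.get_inj_iff.mp this)
  · -- span equality
    congr 1
    ext w
    simp only [Set.mem_range, Set.mem_image, Set.mem_setOf_eq, List.mem_iff_get]
    constructor
    · rintro ⟨i, rfl⟩; exact ⟨L.get i, ⟨i, rfl⟩, rfl⟩
    · rintro ⟨S, ⟨i, rfl⟩, rfl⟩; exact ⟨i, rfl⟩
  · -- colon ideals generated by variables
    intro i
    set a := ind (L.get i) with ha
    set E : Set (Fin P →₀ ℕ) := {e | ∃ j : Fin L.length, j < i ∧ e = ind (L.get j)} with hE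
    have hPi : (fun j => monomial (ind (L.get j)) (1:K)) '' {j | j < i}
        = (fun e => monomial e (1:K)) '' E := by
      ext w
      simp only [Set.mem_image, Set.mem_setOf_eq, hE]
      constructor
      · rintro ⟨j, hj, rfl⟩; exact ⟨ind (L.get j), ⟨j, hj, rfl⟩, rfl⟩
      · rintro ⟨e, ⟨j, hj, rfl⟩, rfl⟩; exact ⟨j, hj, rfl⟩
    refine ⟨{v | ∃ j' : Fin L.length, j' < i ∧ ind (L.get j') ≤ Finsupp.single v 1 + a}, ?_⟩
    rw [hPi]
    apply le_antisymm
    · -- colon ⊆ span of variables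
      intro p hp
      rw [Ideal.mem_colon_span_singleton] at hp
      rw [mem_ideal_span_monomial_image] at hp
      rw [mem_ideal_span_X_image]
      intro xi hxi
      have hsupp : xi + a ∈ (p * monomial a (1:K)).support := by
        rw [mem_support_iff, coeff_mul_monomial, mul_one]
        exact mem_support_iff.mp hxi
      obtain ⟨e, ⟨j, hj, rfl⟩, hle⟩ := hp _ hsupp
      obtain ⟨v, hvj, hvi, j', hj', hsub⟩ := hex i j hj
      refine ⟨v, ⟨j', hj', ?_⟩, ?_⟩
      · calc ind (L.get j') ≤ ind (insert v (L.get i)) := ind_le_iff.mpr hsub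
          _ = Finsupp.single v 1 + a := by rw [ind_insert hvi]
      · have h1 : (ind (L.get j)) v = 1 := ind_apply_mem hvj
        have h2 : a v = 0 := ind_apply_not_mem hvi
        have := hle v
        simp only [Finsupp.add_apply] at this
        omega
    · -- span of variables ⊆ colon
      rw [Ideal.span_le]
      rintro w ⟨v, ⟨j', hj', hle⟩, rfl⟩
      rw [SetLike.mem_coe, Ideal.mem_colon_span_singleton, X_eq_monomial, monomial_mul, one_mul]
      exact mem_span_monomial_image ⟨ind (L.get j'), ⟨j', hj', rfl⟩, hle⟩

end LQAux

namespace LQAux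
variable {K : Type*} [Field K] {P : ℕ}

def famS {P : ℕ} (H : SimpleGraph (Fin P)) (k : ℕ) : Set (Finset (Fin P)) :=
  {S | S.card = k + 2 ∧ ∃ v ∈ S, (∃ b ∈ S, v < b) ∧ ∀ b ∈ S, v < b → H.Adj v b}

lemma card_famS {H : SimpleGraph (Fin P)} {k : ℕ} {S : Finset (Fin P)}
    (h : S ∈ famS H k) : S.card = k + 2 := h.1

lemma HSgens_eq (H : SimpleGraph (Fin P)) (k : ℕ) :
    HSgens K H k = (fun S => monomial (ind S) (1:K)) '' famS H k := by
  classical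
  ext w
  constructor
  · rintro ⟨A, B, hA, hB, hlt, hcardU, ⟨a0, ha0A, ha0max, ha0adj⟩, rfl⟩
    have hdisj : Disjoint A B := by
      rw [Finset.disjoint_left]
      intro a haA haB
      exact absurd (hlt a haA a haB) (lt_irrefl a)
    refine ⟨A ∪ B, ⟨hcardU, a0, Finset.mem_union_left _ ha0A, ?_, ?_⟩, ?_⟩
    · obtain ⟨b, hb⟩ := hB
      exact ⟨b, Finset.mem_union_right _ hb, hlt a0 ha0A b hb⟩
    · intro b hb hlt'
      rcases Finset.mem_union.mp hb with hbA | hbB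
      · exact absurd (ha0max b hbA) (not_le_of_gt hlt')
      · exact ha0adj b hbB
    · rw [← Finset.prod_union hdisj, prod_X_eq]
  · rintro ⟨S, ⟨hcard, v, hvS, ⟨b0, hb0S, hvb0⟩, hadj⟩, rfl⟩
    have hU : S.filter (fun a => a ≤ v) ∪ S.filter (fun b => v < b) = S := by
      rw [Finset.filter_union_right]
      apply Finset.filter_true_of_mem
      intro x _
      exact le_or_gt x v
    refine ⟨S.filter (fun a => a ≤ v), S.filter (fun b => v < b), ⟨v, by simp [hvS]⟩,
      ⟨b0, by simp [hb0S, hvb0]⟩, ?_, ?_, ⟨v, by simp [hvS], ?_, ?_⟩, ?_⟩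
    · intro a ha b hb
      rw [Finset.mem_filter] at ha hb
      exact lt_of_le_of_lt ha.2 hb.2
    · rw [hU, hcard]
    · intro a ha
      exact (Finset.mem_filter.mp ha).2
    · intro b hb
      rw [Finset.mem_filter] at hb
      exact hadj b hb.1 hb.2
    · have hdisj : Disjoint (S.filter (fun a => a ≤ v)) (S.filter (fun b => v < b)) := by
        rw [Finset.disjoint_left]
        intro a ha hb
        rw [Finset.mem_filter] at ha hb
        exact absurd ha.2 (not_le_of_gt hb.2)
      rw [← Finset.prod_union hdisj, prod_X_eq, hU]

end LQAux

namespace LQAux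
variable {K : Type*} [Field K] {P : ℕ}

lemma X_eq_monomial' (v : Fin P) : (X v : MvPolynomial (Fin P) K) = monomial (Finsupp.single v 1) 1 := rfl

lemma extract (H : SimpleGraph (Fin P)) (k : ℕ)
    (h : HasLinearQuotients (Ideal.span (HSgens K H k))) :
    ∃ L : List (Finset (Fin P)), L.Nodup ∧ (∀ S, S ∈ L ↔ S ∈ famS H k) ∧
      (∀ S ∈ L, S.card = k + 2) ∧
      ∀ i j : Fin L.length, j < i → ∃ v, v ∈ L.get j ∧ v ∉ L.get i ∧
        ∃ j' : Fin L.length, j' < i ∧ L.get j' ⊆ insert v (L.get i) := by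
  classical
  obtain ⟨mm, u, hmon, hdvd, hspan, hcol⟩ := h
  rw [HSgens_eq] at hspan
  choose a ha using hmon
  have hrange : Set.range u = (fun e => monomial e (1:K)) '' Set.range a := by
    ext w
    simp only [Set.mem_range, Set.mem_image]
    constructor
    · rintro ⟨i, rfl⟩; exact ⟨a i, ⟨i, rfl⟩, (ha i).symm⟩
    · rintro ⟨e, ⟨i, rfl⟩, rfl⟩; exact ⟨i, (ha i)⟩
  -- each u i is monomial on a set of famS
  have hSf : ∀ i : Fin mm, ∃ S ∈ famS H k, a i = ind S := by
    intro i
    have hui : u i ∈ Ideal.span (Set.range u) := Ideal.subset_span ⟨i, rfl⟩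
    rw [hspan, ha i] at hui
    have : ∃ S ∈ famS H k, ind S ≤ a i := by
      rw [show ((fun S => monomial (ind S) (1:K)) '' famS H k)
          = (fun e => monomial e (1:K)) '' (ind '' famS H k) by rw [Set.image_image],
        monomial_mem_span_iff] at hui
      obtain ⟨e, ⟨S, hS, rfl⟩, hle⟩ := hui
      exact ⟨S, hS, hle⟩
    obtain ⟨S, hS, hle⟩ := this
    have hmem : monomial (ind S) (1:K) ∈ Ideal.span (Set.range u) := by
      rw [hspan]
      exact Ideal.subset_span ⟨S, hS, rfl⟩
    rw [hrange, monomial_mem_span_iff] at hmem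
    obtain ⟨e, ⟨j, rfl⟩, hle'⟩ := hmem
    have hji : j = i := by
      by_contra hne
      exact hdvd j i hne (by rw [ha j, ha i]; exact monomial_dvd_of_le (hle'.trans hle))
    subst hji
    exact ⟨S, hS, le_antisymm hle' hle⟩
  choose Sf hSfmem hSfa using hSf
  have hSfinj : Function.Injective Sf := by
    intro i j hij
    by_contra hne
    exact hdvd i j (fun hh => hne (hh ▸ rfl))
      (by rw [ha i, ha j, hSfa i, hSfa j, hij])
  refine ⟨List.ofFn Sf, List.nodup_ofFn.mpr hSfinj, ?_, ?_, ?_⟩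
  · intro S
    rw [List.mem_ofFn]
    constructor
    · rintro ⟨i, rfl⟩; exact hSfmem i
    · intro hS
      have hmem : monomial (ind S) (1:K) ∈ Ideal.span (Set.range u) := by
        rw [hspan]; exact Ideal.subset_span ⟨S, hS, rfl⟩
      rw [hrange, monomial_mem_span_iff] at hmem
      obtain ⟨e, ⟨j, rfl⟩, hle⟩ := hmem
      rw [hSfa j, ind_le_iff] at hle
      refine ⟨j, Finset.eq_of_subset_of_card_le hle ?_⟩
      rw [card_famS hS, card_famS (hSfmem j)]
  · intro S hS
    rw [List.mem_ofFn] at hS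
    obtain ⟨i, rfl⟩ := hS
    exact card_famS (hSfmem i)
  · intro i j hij
    have hlen : (List.ofFn Sf).length = mm := List.length_ofFn
    set i' : Fin mm := Fin.cast hlen i with hi'
    set j' : Fin mm := Fin.cast hlen j with hj'
    have hgeti : (List.ofFn Sf).get i = Sf i' := List.get_ofFn Sf i
    have hgetj : (List.ofFn Sf).get j = Sf j' := List.get_ofFn Sf j
    have hj'i' : j' < i' := hij
    -- the quotient monomial lies in the colon ideal
    have hqmem : (monomial (ind (Sf j') - ind (Sf i')) (1:K)) * u i'
        ∈ Ideal.span (u '' {l | l < i'}) := by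
      rw [ha i', monomial_mul, one_mul]
      have hdvd' : u j' ∣ monomial (ind (Sf j') - ind (Sf i') + a i') 1 := by
        rw [ha j']
        apply monomial_dvd_of_le
        intro v
        rw [Finsupp.add_apply, Finsupp.tsub_apply, hSfa i', hSfa j']
        omega
      obtain ⟨c, hc⟩ := hdvd'
      rw [hc]
      exact Ideal.mul_mem_right c _ (Ideal.subset_span ⟨j', hj'i', rfl⟩)
    obtain ⟨T, hT⟩ := hcol i'
    have hq : (monomial (ind (Sf j') - ind (Sf i')) (1:K)) ∈ Ideal.span (X '' T) := by
      rw [← hT, Ideal.mem_colon_span_singleton]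
      exact hqmem
    rw [mem_ideal_span_X_image] at hq
    obtain ⟨v, hvT, hv⟩ := hq (ind (Sf j') - ind (Sf i')) (by
      rw [support_monomial_one]; exact Finset.mem_singleton_self _)
    rw [Finsupp.tsub_apply] at hv
    have hvj : v ∈ Sf j' := by
      by_contra hvj
      rw [ind_apply_not_mem hvj] at hv
      omega
    have hvi : v ∉ Sf i' := by
      intro hvi
      rw [ind_apply_mem hvi, ind_apply] at hv
      by_cases hm : v ∈ Sf j' <;> simp [hm] at hv
    -- X v * u i' lies in the span of the previous generators
    have hXv : (X v : MvPolynomial (Fin P) K) * u i' ∈ Ideal.span (u '' {l | l < i'}) := by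
      rw [← Ideal.mem_colon_span_singleton, hT]
      exact Ideal.subset_span ⟨v, hvT, rfl⟩
    have hprior : u '' {l | l < i'} = (fun e => monomial e (1:K)) '' {e | ∃ l : Fin mm, l < i' ∧ e = a l} := by
      ext w
      simp only [Set.mem_image, Set.mem_setOf_eq]
      constructor
      · rintro ⟨l, hl, rfl⟩; exact ⟨a l, ⟨l, hl, rfl⟩, (ha l).symm⟩
      · rintro ⟨e, ⟨l, hl, rfl⟩, rfl⟩; exact ⟨l, hl, (ha l)⟩
    rw [ha i', X_eq_monomial', monomial_mul, one_mul, hprior, monomial_mem_span_iff] at hXv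
    obtain ⟨e, ⟨l, hl, rfl⟩, hle⟩ := hXv
    rw [hSfa l, hSfa i'] at hle
    refine ⟨v, hgetj ▸ hvj, hgeti ▸ hvi, Fin.cast hlen.symm l, hl, ?_⟩
    have hgetl : (List.ofFn Sf).get (Fin.cast hlen.symm l) = Sf l := by
      rw [List.get_ofFn]
      congr 1
    rw [hgetl, hgeti]
    rw [← ind_le_iff, ind_insert hvi]
    exact hle

end LQAux

namespace LQAux
variable {P : ℕ}

def gexp {P : ℕ} (i : Fin P) : ℕ := P - 1 - i.val

lemma gexp_lt (i : Fin P) : gexp i < P := by have := i.isLt; unfold gexp; omega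

lemma gexp_inj : Function.Injective (gexp (P := P)) := by
  intro i j h
  have hi := i.isLt; have hj := j.isLt
  unfold gexp at h
  exact Fin.ext (by omega)

lemma gexp_strict {i j : Fin P} (h : i < j) : gexp j < gexp i := by
  have hi := i.isLt; have hj := j.isLt
  have := Fin.lt_iff_val_lt_val.mp h
  unfold gexp; omega

def Nval {P : ℕ} (S : Finset (Fin P)) : ℕ := ∑ i ∈ S, 2 ^ gexp i

lemma sum_range_two_pow (c : ℕ) : ∑ j ∈ Finset.range c, 2 ^ j = 2 ^ c - 1 := by
  induction c with
  | zero => simp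
  | succ c ih =>
      rw [Finset.sum_range_succ, ih, pow_succ]
      have : 1 ≤ 2 ^ c := Nat.one_le_two_pow
      omega

lemma Nval_lt_pow {S : Finset (Fin P)} {c : ℕ} (h : ∀ i ∈ S, gexp i < c) :
    Nval S < 2 ^ c := by
  have himg : Nval S = ∑ j ∈ S.image gexp, 2 ^ j :=
    (Finset.sum_image (fun a _ b _ hab => gexp_inj hab)).symm
  have hsub : S.image gexp ⊆ Finset.range c := by
    intro j hj
    rw [Finset.mem_image] at hj
    obtain ⟨i, hi, rfl⟩ := hj
    exact Finset.mem_range.mpr (h i hi)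
  have : ∑ j ∈ S.image gexp, 2 ^ j ≤ ∑ j ∈ Finset.range c, 2 ^ j :=
    Finset.sum_le_sum_of_subset hsub
  rw [sum_range_two_pow] at this
  have h2 : 1 ≤ 2 ^ c := Nat.one_le_two_pow
  omega

lemma Nval_lt (S : Finset (Fin P)) : Nval S < 2 ^ P :=
  Nval_lt_pow (fun i _ => gexp_lt i)

lemma Nval_le (S : Finset (Fin P)) : Nval S ≤ 2 ^ P := le_of_lt (Nval_lt S)

lemma Nval_strict {X Y : Finset (Fin P)} {v : Fin P} (hv : v ∈ Y) (hvX : v ∉ X)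
    (hmin : ∀ u, u ∈ X → u ∉ Y → v < u) : Nval X < Nval Y := by
  classical
  have hXsplit : Nval (X ∩ Y) + Nval (X \ Y) = Nval X :=
    Finset.sum_inter_add_sum_sdiff X Y _
  have hvXY : v ∉ X ∩ Y := fun h => hvX (Finset.mem_inter.mp h).1
  have hins : insert v (X ∩ Y) ⊆ Y := by
    intro u hu
    rcases Finset.mem_insert.mp hu with rfl | hu
    · exact hv
    · exact (Finset.mem_inter.mp hu).2
  have hY : 2 ^ gexp v + Nval (X ∩ Y) ≤ Nval Y := by
    have := Finset.sum_le_sum_of_subset (f := fun i => 2 ^ gexp i) hins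
    rwa [Finset.sum_insert hvXY] at this
  have hsd : Nval (X \ Y) < 2 ^ gexp v := by
    apply Nval_lt_pow
    intro i hi
    rw [Finset.mem_sdiff] at hi
    exact gexp_strict (hmin i hi.1 hi.2)
  omega

lemma min_cases {X Y : Finset (Fin P)} (hne : X ≠ Y) :
    ∃ v, ((v ∈ X ∧ v ∉ Y) ∨ (v ∈ Y ∧ v ∉ X)) ∧
      ∀ u, ((u ∈ X ∧ u ∉ Y) ∨ (u ∈ Y ∧ u ∉ X)) → u ≠ v → v < u := by
  classical
  let D := (X \ Y) ∪ (Y \ X)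
  have hD : D = (X \ Y) ∪ (Y \ X) := rfl
  have hDne : D.Nonempty := by
    rw [Finset.nonempty_iff_ne_empty]
    intro hempty
    apply hne
    apply Finset.Subset.antisymm
    · intro x hx
      by_contra hxY
      have : x ∈ D := Finset.mem_union_left _ (Finset.mem_sdiff.mpr ⟨hx, hxY⟩)
      rw [hempty] at this; exact absurd this (Finset.notMem_empty x)
    · intro x hx
      by_contra hxX
      have : x ∈ D := Finset.mem_union_right _ (Finset.mem_sdiff.mpr ⟨hx, hxX⟩)
      rw [hempty] at this; exact absurd this (Finset.notMem_empty x)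
  refine ⟨D.min' hDne, ?_, ?_⟩
  · have := D.min'_mem hDne
    rw [Finset.mem_union, Finset.mem_sdiff, Finset.mem_sdiff] at this
    tauto
  · intro u hu hune
    have huD : u ∈ D := by
      rw [Finset.mem_union, Finset.mem_sdiff, Finset.mem_sdiff]; tauto
    exact lt_of_le_of_ne (D.min'_le u huD) (Ne.symm hune)

lemma Nval_inj {X Y : Finset (Fin P)} (h : Nval X = Nval Y) : X = Y := by
  by_contra hne
  obtain ⟨v, hv, hmin⟩ := min_cases hne
  rcases hv with ⟨hvX, hvY⟩ | ⟨hvY, hvX⟩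
  · have : Nval Y < Nval X := Nval_strict hvX hvY
      (fun u huY huX => hmin u (Or.inr ⟨huY, huX⟩) (fun he => (he ▸ huX) hvX))
    omega
  · have : Nval X < Nval Y := Nval_strict hvY hvX
      (fun u huX huY => hmin u (Or.inl ⟨huX, huY⟩) (fun he => (he ▸ huY) hvY))
    omega

lemma swap_exists {X Y : Finset (Fin P)} (hcard : X.card = Y.card)
    (h : Nval Y < Nval X) : ∃ v w, v ∈ X ∧ v ∉ Y ∧ w ∈ Y ∧ v < w := by
  have hne : X ≠ Y := fun he => by rw [he] at h; omega
  obtain ⟨v, hv, hmin⟩ := min_cases hne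
  have hvX : v ∈ X ∧ v ∉ Y := by
    rcases hv with h1 | ⟨hvY, hvX⟩
    · exact h1
    · exfalso
      have : Nval X < Nval Y := Nval_strict hvY hvX
        (fun u huX huY => hmin u (Or.inl ⟨huX, huY⟩) (fun he => (he ▸ huY) hvY))
      omega
  refine ⟨v, ?_⟩
  by_contra hw
  push_neg at hw
  have hYX : Y ⊆ X := by
    intro u huY
    by_contra huX
    have hune : u ≠ v := fun he => (he ▸ hvX.2) huY
    have := hmin u (Or.inr ⟨huY, huX⟩) hune
    have := hw u hvX.1 hvX.2 huY
    exact absurd ‹v < u› (not_lt.mpr ‹u ≤ v›)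
  have : Y ⊂ X := Finset.ssubset_iff_of_subset hYX |>.mpr ⟨v, hvX.1, hvX.2⟩
  have := Finset.card_lt_card this
  omega

lemma Nval_swap {Y : Finset (Fin P)} {v w : Fin P} (hv : v ∉ Y) (hw : w ∈ Y)
    (hvw : v < w) : Nval Y < Nval (insert v (Y.erase w)) := by
  have hvE : v ∉ Y.erase w := fun h => hv (Finset.mem_of_mem_erase h)
  have h1 : Nval (insert v (Y.erase w)) = 2 ^ gexp v + Nval (Y.erase w) := by
    rw [Nval, Finset.sum_insert hvE]; rfl
  have h2 : Nval (Y.erase w) + 2 ^ gexp w = Nval Y := Finset.sum_erase_add _ _ hw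
  have h3 : 2 ^ gexp w < 2 ^ gexp v :=
    Nat.pow_lt_pow_right one_lt_two (gexp_strict hvw)
  omega

/-! ### The key function -/

def Cpart (n : ℕ) {P : ℕ} (S : Finset (Fin P)) : Finset (Fin P) :=
  S.filter (fun x => (x : ℕ) < n)

def Zpart (n : ℕ) {P : ℕ} (S : Finset (Fin P)) : Finset (Fin P) :=
  S.filter (fun x => ¬ (x : ℕ) < n)

lemma Cpart_union_Zpart (n : ℕ) (S : Finset (Fin P)) : Cpart n S ∪ Zpart n S = S :=
  Finset.filter_union_filter_not_eq _ S

lemma Cpart_card_add_Zpart_card (n : ℕ) (S : Finset (Fin P)) :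
    (Cpart n S).card + (Zpart n S).card = S.card :=
  Finset.card_filter_add_card_filter_not _

lemma mem_Cpart {n : ℕ} {S : Finset (Fin P)} {x : Fin P} :
    x ∈ Cpart n S ↔ x ∈ S ∧ (x : ℕ) < n := Finset.mem_filter

lemma mem_Zpart {n : ℕ} {S : Finset (Fin P)} {x : Fin P} :
    x ∈ Zpart n S ↔ x ∈ S ∧ ¬ (x : ℕ) < n := Finset.mem_filter

def BB (P : ℕ) : ℕ := 2 ^ P + P + 3

def key (n : ℕ) {P : ℕ} (S : Finset (Fin P)) : ℕ :=
  (P + 2 - (Cpart n S).card) * (BB P) ^ 2 + (2 ^ P - Nval (Zpart n S)) * BB P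
    + (2 ^ P - Nval (Cpart n S))

lemma digits_inj {B a b c a' b' c' : ℕ} (hb : b < B) (hc : c < B) (hb' : b' < B)
    (hc' : c' < B) (h : a * B ^ 2 + b * B + c = a' * B ^ 2 + b' * B + c') :
    a = a' ∧ b = b' ∧ c = c' := by
  have hB : 0 < B := Nat.pos_of_ne_zero (fun h0 => by subst h0; omega)
  have e1 : a * B ^ 2 + b * B + c = c + (b + a * B) * B := by ring
  have e2 : a' * B ^ 2 + b' * B + c' = c' + (b' + a' * B) * B := by ring
  rw [e1, e2] at h
  have hcc : c = c' := by
    have h1 := congrArg (· % B) h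
    simpa [Nat.add_mul_mod_self_right, Nat.mod_eq_of_lt hc, Nat.mod_eq_of_lt hc'] using h1
  have hrest : b + a * B = b' + a' * B := by
    have h1 := congrArg (· / B) h
    simpa [Nat.add_mul_div_right _ _ hB, Nat.div_eq_of_lt hc, Nat.div_eq_of_lt hc'] using h1
  have hbb : b = b' := by
    have h1 := congrArg (· % B) hrest
    simpa [Nat.add_mul_mod_self_right, Nat.mod_eq_of_lt hb, Nat.mod_eq_of_lt hb'] using h1
  have haa : a = a' := by
    have h1 := congrArg (· / B) hrest
    simp only [Nat.add_mul_div_right _ _ hB, Nat.div_eq_of_lt hb, Nat.div_eq_of_lt hb'] at h1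
    omega
  exact ⟨haa, hbb, hcc⟩

lemma card_Cpart_le (n : ℕ) (S : Finset (Fin P)) : (Cpart n S).card ≤ P := by
  have := Finset.card_le_univ (Cpart n S)
  simpa using this

lemma key_inj {n : ℕ} {S T : Finset (Fin P)} (h : key n S = key n T) : S = T := by
  have hB1 : 2 ^ P < BB P := by unfold BB; omega
  have h1 : 2 ^ P - Nval (Zpart n S) < BB P := lt_of_le_of_lt (Nat.sub_le _ _) hB1
  have h2 : 2 ^ P - Nval (Cpart n S) < BB P := lt_of_le_of_lt (Nat.sub_le _ _) hB1
  have h3 : 2 ^ P - Nval (Zpart n T) < BB P := lt_of_le_of_lt (Nat.sub_le _ _) hB1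
  have h4 : 2 ^ P - Nval (Cpart n T) < BB P := lt_of_le_of_lt (Nat.sub_le _ _) hB1
  obtain ⟨ha, hb, hc⟩ := digits_inj h1 h2 h3 h4 h
  have hZ : Zpart n S = Zpart n T := by
    apply Nval_inj
    have := Nval_lt (Zpart n S); have := Nval_lt (Zpart n T)
    omega
  have hC : Cpart n S = Cpart n T := by
    apply Nval_inj
    have := Nval_lt (Cpart n S); have := Nval_lt (Cpart n T)
    omega
  rw [← Cpart_union_Zpart n S, ← Cpart_union_Zpart n T, hZ, hC]

lemma key_lt₁ {n : ℕ} {S T : Finset (Fin P)}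
    (h : (Cpart n T).card < (Cpart n S).card) : key n S < key n T := by
  have hB1 : 2 ^ P + 1 ≤ BB P := by unfold BB; omega
  have hd1 : 2 ^ P - Nval (Zpart n S) ≤ 2 ^ P := Nat.sub_le _ _
  have hd0 : 2 ^ P - Nval (Cpart n S) ≤ 2 ^ P := Nat.sub_le _ _
  have hcS : (Cpart n S).card ≤ P + 2 := le_trans (card_Cpart_le n S) (by omega)
  have hstep : (P + 2 - (Cpart n S).card) + 1 ≤ P + 2 - (Cpart n T).card := by omega
  have h1 : 2 ^ P * BB P + 2 ^ P < BB P * BB P := by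
    calc 2 ^ P * BB P + 2 ^ P < 2 ^ P * BB P + BB P := by omega
      _ = (2 ^ P + 1) * BB P := by ring
      _ ≤ BB P * BB P := Nat.mul_le_mul_right (BB P) hB1
  calc key n S ≤ (P + 2 - (Cpart n S).card) * BB P ^ 2 + 2 ^ P * BB P + 2 ^ P := by
        unfold key
        have := Nat.mul_le_mul_right (BB P) hd1
        omega
    _ < (P + 2 - (Cpart n S).card) * BB P ^ 2 + BB P * BB P := by omega
    _ = ((P + 2 - (Cpart n S).card) + 1) * BB P ^ 2 := by ring
    _ ≤ (P + 2 - (Cpart n T).card) * BB P ^ 2 := Nat.mul_le_mul_right _ hstep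
    _ ≤ key n T := by unfold key; omega

lemma key_lt₂ {n : ℕ} {S T : Finset (Fin P)}
    (hc : (Cpart n S).card = (Cpart n T).card)
    (h : Nval (Zpart n T) < Nval (Zpart n S)) : key n S < key n T := by
  have hB1 : 2 ^ P + 1 ≤ BB P := by unfold BB; omega
  have hZS := Nval_lt (Zpart n S)
  have hd0 : 2 ^ P - Nval (Cpart n S) ≤ 2 ^ P := Nat.sub_le _ _
  have hstep : (2 ^ P - Nval (Zpart n S)) + 1 ≤ 2 ^ P - Nval (Zpart n T) := by omega
  have h2 : ((2 ^ P - Nval (Zpart n S)) + 1) * BB P ≤ (2 ^ P - Nval (Zpart n T)) * BB P :=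
    Nat.mul_le_mul_right (BB P) hstep
  have h3 : ((2 ^ P - Nval (Zpart n S)) + 1) * BB P
      = (2 ^ P - Nval (Zpart n S)) * BB P + BB P := by ring
  unfold key
  rw [hc]
  omega

lemma key_lt₃ {n : ℕ} {S T : Finset (Fin P)}
    (hc : (Cpart n S).card = (Cpart n T).card)
    (hz : Zpart n S = Zpart n T)
    (h : Nval (Cpart n T) < Nval (Cpart n S)) : key n S < key n T := by
  unfold key
  rw [hc, hz]
  have hCS := Nval_lt (Cpart n S)
  omega

end LQAux

namespace LQAux
variable {P : ℕ}

def isMixed (n k : ℕ) {P : ℕ} (S : Finset (Fin P)) : Prop :=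
  S.card = k + 2 ∧ (Cpart n S).Nonempty ∧ (Zpart n S).Nonempty

lemma Cpart_insert_of_lt {n : ℕ} {v : Fin P} (h : (v : ℕ) < n) (S : Finset (Fin P)) :
    Cpart n (insert v S) = insert v (Cpart n S) := by
  classical
  unfold Cpart
  rw [Finset.filter_insert, if_pos h]

lemma Cpart_insert_of_ge {n : ℕ} {v : Fin P} (h : ¬ (v : ℕ) < n) (S : Finset (Fin P)) :
    Cpart n (insert v S) = Cpart n S := by
  classical
  unfold Cpart
  rw [Finset.filter_insert, if_neg h]

lemma Zpart_insert_of_ge {n : ℕ} {v : Fin P} (h : ¬ (v : ℕ) < n) (S : Finset (Fin P)) :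
    Zpart n (insert v S) = insert v (Zpart n S) := by
  classical
  unfold Zpart
  rw [Finset.filter_insert, if_pos h]

lemma Zpart_insert_of_lt {n : ℕ} {v : Fin P} (h : (v : ℕ) < n) (S : Finset (Fin P)) :
    Zpart n (insert v S) = Zpart n S := by
  classical
  unfold Zpart
  rw [Finset.filter_insert, if_neg (by simpa using h)]

lemma Cpart_erase {n : ℕ} (w : Fin P) (S : Finset (Fin P)) :
    Cpart n (S.erase w) = (Cpart n S).erase w := Finset.filter_erase _ _ _

lemma Zpart_erase {n : ℕ} (w : Fin P) (S : Finset (Fin P)) :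
    Zpart n (S.erase w) = (Zpart n S).erase w := Finset.filter_erase _ _ _

lemma mixed_hex {n k : ℕ} {Tj Ti : Finset (Fin P)} (hj : isMixed n k Tj)
    (hi : isMixed n k Ti) (hne : Tj ≠ Ti) (hkey : key n Tj < key n Ti) :
    ∃ v, v ∈ Tj ∧ v ∉ Ti ∧
      ∃ T', isMixed n k T' ∧ key n T' < key n Ti ∧ T' ⊆ insert v Ti := by
  classical
  obtain ⟨hcardj, hCj, hZj⟩ := hj
  obtain ⟨hcardi, hCi, hZi⟩ := hi
  have hsplitj := Cpart_card_add_Zpart_card n Tj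
  have hspliti := Cpart_card_add_Zpart_card n Ti
  have hcases : (Cpart n Ti).card < (Cpart n Tj).card ∨
      ((Cpart n Tj).card = (Cpart n Ti).card ∧
        (Nval (Zpart n Ti) < Nval (Zpart n Tj) ∨
          (Zpart n Tj = Zpart n Ti ∧ Nval (Cpart n Ti) < Nval (Cpart n Tj)))) := by
    rcases lt_trichotomy (Cpart n Tj).card (Cpart n Ti).card with h | h | h
    · exact absurd (key_lt₁ h) (by omega)
    · refine Or.inr ⟨h, ?_⟩
      rcases lt_trichotomy (Nval (Zpart n Tj)) (Nval (Zpart n Ti)) with h2 | h2 | h2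
      · exact absurd (key_lt₂ h.symm h2) (by omega)
      · have hZeq : Zpart n Tj = Zpart n Ti := Nval_inj h2
        refine Or.inr ⟨hZeq, ?_⟩
        rcases lt_trichotomy (Nval (Cpart n Tj)) (Nval (Cpart n Ti)) with h3 | h3 | h3
        · exact absurd (key_lt₃ h.symm hZeq.symm h3) (by omega)
        · exfalso
          apply hne
          have hCeq : Cpart n Tj = Cpart n Ti := Nval_inj h3
          rw [← Cpart_union_Zpart n Tj, ← Cpart_union_Zpart n Ti, hCeq, hZeq]
        · exact h3
      · exact Or.inl h2
    · exact Or.inl h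
  rcases hcases with hA | ⟨hteq, hB⟩
  · -- Case A : strictly more block-1 elements in Tj
    have hns : ¬ Cpart n Tj ⊆ Cpart n Ti := fun hs => by
      have := Finset.card_le_card hs; omega
    obtain ⟨v, hvCj, hvCi⟩ := Finset.not_subset.mp hns
    have hvTj : v ∈ Tj := (mem_Cpart.mp hvCj).1
    have hvn : (v : ℕ) < n := (mem_Cpart.mp hvCj).2
    have hvTi : v ∉ Ti := fun h => hvCi (mem_Cpart.mpr ⟨h, hvn⟩)
    have hZjcard : 1 ≤ (Zpart n Tj).card := Finset.card_pos.mpr hZj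
    have hZicard : 2 ≤ (Zpart n Ti).card := by omega
    obtain ⟨w, hwZ⟩ := hZi
    have hwTi : w ∈ Ti := (mem_Zpart.mp hwZ).1
    have hwge : ¬ (w : ℕ) < n := (mem_Zpart.mp hwZ).2
    refine ⟨v, hvTj, hvTi, insert v (Ti.erase w), ⟨?_, ?_, ?_⟩, ?_, ?_⟩
    · rw [Finset.card_insert_of_notMem (fun h => hvTi (Finset.mem_of_mem_erase h)),
        Finset.card_erase_of_mem hwTi, hcardi]
      omega
    · rw [Cpart_insert_of_lt hvn]
      exact ⟨v, Finset.mem_insert_self _ _⟩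
    · rw [Zpart_insert_of_lt hvn, Zpart_erase]
      rw [← Finset.card_pos, Finset.card_erase_of_mem hwZ]
      omega
    · apply key_lt₁
      rw [Cpart_insert_of_lt hvn, Cpart_erase,
        Finset.erase_eq_of_notMem (fun h => hwge (mem_Cpart.mp h).2),
        Finset.card_insert_of_notMem hvCi]
      omega
    · exact Finset.insert_subset_insert v (Finset.erase_subset _ _)
  rcases hB with hB | ⟨hZeq, hC⟩
  · -- Case B : same number of block-1 elements, Z-part strictly earlier
    have hzcard : (Zpart n Tj).card = (Zpart n Ti).card := by omega
    obtain ⟨v, w, hvZj, hvZi, hwZi, hvw⟩ := swap_exists hzcard hB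
    have hvTj : v ∈ Tj := (mem_Zpart.mp hvZj).1
    have hvge : ¬ (v : ℕ) < n := (mem_Zpart.mp hvZj).2
    have hvTi : v ∉ Ti := fun h => hvZi (mem_Zpart.mpr ⟨h, hvge⟩)
    have hwTi : w ∈ Ti := (mem_Zpart.mp hwZi).1
    have hwge : ¬ (w : ℕ) < n := (mem_Zpart.mp hwZi).2
    have hCeq : Cpart n (insert v (Ti.erase w)) = Cpart n Ti := by
      rw [Cpart_insert_of_ge hvge, Cpart_erase,
        Finset.erase_eq_of_notMem (fun h => hwge (mem_Cpart.mp h).2)]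
    refine ⟨v, hvTj, hvTi, insert v (Ti.erase w), ⟨?_, ?_, ?_⟩, ?_, ?_⟩
    · rw [Finset.card_insert_of_notMem (fun h => hvTi (Finset.mem_of_mem_erase h)),
        Finset.card_erase_of_mem hwTi, hcardi]
      omega
    · rw [hCeq]; exact hCi
    · rw [Zpart_insert_of_ge hvge]
      exact ⟨v, Finset.mem_insert_self _ _⟩
    · apply key_lt₂
      · rw [hCeq]
      · rw [Zpart_insert_of_ge hvge, Zpart_erase]
        exact Nval_swap hvZi hwZi hvw
    · exact Finset.insert_subset_insert v (Finset.erase_subset _ _)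
  · -- Case C : same Z-part, C-part strictly earlier
    obtain ⟨v, w, hvCj, hvCi, hwCi, hvw⟩ := swap_exists hteq hC
    have hvTj : v ∈ Tj := (mem_Cpart.mp hvCj).1
    have hvn : (v : ℕ) < n := (mem_Cpart.mp hvCj).2
    have hvTi : v ∉ Ti := fun h => hvCi (mem_Cpart.mpr ⟨h, hvn⟩)
    have hwTi : w ∈ Ti := (mem_Cpart.mp hwCi).1
    have hwn : (w : ℕ) < n := (mem_Cpart.mp hwCi).2
    have hZeq' : Zpart n (insert v (Ti.erase w)) = Zpart n Ti := by
      rw [Zpart_insert_of_lt hvn, Zpart_erase,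
        Finset.erase_eq_of_notMem (fun h => (mem_Zpart.mp h).2 hwn)]
    refine ⟨v, hvTj, hvTi, insert v (Ti.erase w), ⟨?_, ?_, ?_⟩, ?_, ?_⟩
    · rw [Finset.card_insert_of_notMem (fun h => hvTi (Finset.mem_of_mem_erase h)),
        Finset.card_erase_of_mem hwTi, hcardi]
      omega
    · rw [Cpart_insert_of_lt hvn]
      exact ⟨v, Finset.mem_insert_self _ _⟩
    · rw [hZeq']; exact hZi
    · apply key_lt₃
      · rw [Cpart_insert_of_lt hvn, Cpart_erase,
          Finset.card_insert_of_notMem (fun h => hvCi (Finset.mem_of_mem_erase h)),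
          Finset.card_erase_of_mem hwCi]
        have := Finset.card_pos.mpr hCi
        omega
      · exact hZeq'
      · rw [Cpart_insert_of_lt hvn, Cpart_erase]
        exact Nval_swap hvCi hwCi hvw
    · exact Finset.insert_subset_insert v (Finset.erase_subset _ _)

end LQAux

namespace LQAux
variable {n m : ℕ} {Γ₁ : SimpleGraph (Fin n)} {Γ₂ : SimpleGraph (Fin m)}

def e1 (n m : ℕ) : Fin n ↪ Fin (n + m) :=
  ⟨Fin.castAdd m, fun a b h => Fin.ext (by simpa [Fin.ext_iff] using h)⟩

def e2 (n m : ℕ) : Fin m ↪ Fin (n + m) :=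
  ⟨Fin.natAdd n, fun a b h => by
    have := congrArg Fin.val h
    simp only [Fin.natAdd] at this
    exact Fin.ext (by omega)⟩

lemma e1_val (a : Fin n) : ((e1 n m a : Fin (n + m)) : ℕ) = (a : ℕ) := rfl

lemma e2_val (a : Fin m) : ((e2 n m a : Fin (n + m)) : ℕ) = n + (a : ℕ) := rfl

lemma e1_lt_iff {a b : Fin n} : e1 n m a < e1 n m b ↔ a < b := Iff.rfl

lemma e2_lt_iff {a b : Fin m} : e2 n m a < e2 n m b ↔ a < b := by
  rw [Fin.lt_def, Fin.lt_def, e2_val, e2_val]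
  omega

lemma not_adj_cross {x y : Fin (n + m)} (hx : (x : ℕ) < n) (hy : ¬ (y : ℕ) < n) :
    ¬ (disjUnionGraph Γ₁ Γ₂).Adj x y := by
  rintro (⟨a, b, hab, rfl, rfl⟩ | ⟨a, b, hab, rfl, rfl⟩)
  · exact hy (by simpa using b.isLt)
  · revert hx
    simp [Fin.natAdd]

lemma G_adj_cross {x y : Fin (n + m)} (hx : (x : ℕ) < n) (hy : ¬ (y : ℕ) < n) :
    ((disjUnionGraph Γ₁ Γ₂)ᶜ).Adj x y := by
  rw [SimpleGraph.compl_adj]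
  exact ⟨fun h => hy (h ▸ hx), not_adj_cross hx hy⟩

lemma adj_block1 {a b : Fin n} :
    (disjUnionGraph Γ₁ Γ₂).Adj (e1 n m a) (e1 n m b) ↔ Γ₁.Adj a b := by
  constructor
  · rintro (⟨a', b', hab, ha, hb⟩ | ⟨a', b', hab, ha, hb⟩)
    · have ha' : a = a' := (e1 n m).injective ha
      have hb' : b = b' := (e1 n m).injective hb
      rw [ha', hb']; exact hab
    · exfalso
      have h1 := congrArg Fin.val ha
      have h2 := a.isLt
      simp only [e1_val, Fin.natAdd] at h1
      omega
  · intro h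
    exact Or.inl ⟨a, b, h, rfl, rfl⟩

lemma adj_block2 {a b : Fin m} :
    (disjUnionGraph Γ₁ Γ₂).Adj (e2 n m a) (e2 n m b) ↔ Γ₂.Adj a b := by
  constructor
  · rintro (⟨a', b', hab, ha, hb⟩ | ⟨a', b', hab, ha, hb⟩)
    · exfalso
      have h1 := congrArg Fin.val ha
      have h2 := a'.isLt
      simp only [e2_val] at h1
      have h3 : ((Fin.castAdd m a' : Fin (n + m)) : ℕ) = (a' : ℕ) := rfl
      omega
    · have ha' : a = a' := (e2 n m).injective ha
      have hb' : b = b' := (e2 n m).injective hb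
      rw [ha', hb']; exact hab
  · intro h
    exact Or.inr ⟨a, b, h, rfl, rfl⟩

lemma G_adj_block1 {a b : Fin n} :
    ((disjUnionGraph Γ₁ Γ₂)ᶜ).Adj (e1 n m a) (e1 n m b) ↔ Γ₁ᶜ.Adj a b := by
  rw [SimpleGraph.compl_adj, SimpleGraph.compl_adj, adj_block1]
  constructor
  · rintro ⟨h1, h2⟩; exact ⟨fun h => h1 (by rw [h]), h2⟩
  · rintro ⟨h1, h2⟩; exact ⟨fun h => h1 ((e1 n m).injective h), h2⟩

lemma G_adj_block2 {a b : Fin m} :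
    ((disjUnionGraph Γ₁ Γ₂)ᶜ).Adj (e2 n m a) (e2 n m b) ↔ Γ₂ᶜ.Adj a b := by
  rw [SimpleGraph.compl_adj, SimpleGraph.compl_adj, adj_block2]
  constructor
  · rintro ⟨h1, h2⟩; exact ⟨fun h => h1 (by rw [h]), h2⟩
  · rintro ⟨h1, h2⟩; exact ⟨fun h => h1 ((e2 n m).injective h), h2⟩

lemma famS_map1 {S1 : Finset (Fin n)} {k : ℕ} :
    S1.map (e1 n m) ∈ famS ((disjUnionGraph Γ₁ Γ₂)ᶜ) k ↔ S1 ∈ famS Γ₁ᶜ k := by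
  constructor
  · rintro ⟨hcard, v, hvS, ⟨b, hbS, hvb⟩, hadj⟩
    obtain ⟨v', hv'S, rfl⟩ := Finset.mem_map.mp hvS
    obtain ⟨b', hb'S, rfl⟩ := Finset.mem_map.mp hbS
    refine ⟨by rwa [Finset.card_map] at hcard, v', hv'S,
      ⟨b', hb'S, e1_lt_iff.mp hvb⟩, ?_⟩
    intro b0 hb0 hlt
    exact G_adj_block1.mp (hadj (e1 n m b0) (Finset.mem_map_of_mem _ hb0)
      (e1_lt_iff.mpr hlt))
  · rintro ⟨hcard, v, hvS, ⟨b, hbS, hvb⟩, hadj⟩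
    refine ⟨by rwa [Finset.card_map], e1 n m v, Finset.mem_map_of_mem _ hvS,
      ⟨e1 n m b, Finset.mem_map_of_mem _ hbS, e1_lt_iff.mpr hvb⟩, ?_⟩
    intro b0 hb0 hlt
    obtain ⟨b0', hb0'S, rfl⟩ := Finset.mem_map.mp hb0
    exact G_adj_block1.mpr (hadj b0' hb0'S (e1_lt_iff.mp hlt))

lemma famS_map2 {S2 : Finset (Fin m)} {k : ℕ} :
    S2.map (e2 n m) ∈ famS ((disjUnionGraph Γ₁ Γ₂)ᶜ) k ↔ S2 ∈ famS Γ₂ᶜ k := by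
  constructor
  · rintro ⟨hcard, v, hvS, ⟨b, hbS, hvb⟩, hadj⟩
    obtain ⟨v', hv'S, rfl⟩ := Finset.mem_map.mp hvS
    obtain ⟨b', hb'S, rfl⟩ := Finset.mem_map.mp hbS
    refine ⟨by rwa [Finset.card_map] at hcard, v', hv'S,
      ⟨b', hb'S, e2_lt_iff.mp hvb⟩, ?_⟩
    intro b0 hb0 hlt
    exact G_adj_block2.mp (hadj (e2 n m b0) (Finset.mem_map_of_mem _ hb0)
      (e2_lt_iff.mpr hlt))
  · rintro ⟨hcard, v, hvS, ⟨b, hbS, hvb⟩, hadj⟩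
    refine ⟨by rwa [Finset.card_map], e2 n m v, Finset.mem_map_of_mem _ hvS,
      ⟨e2 n m b, Finset.mem_map_of_mem _ hbS, e2_lt_iff.mpr hvb⟩, ?_⟩
    intro b0 hb0 hlt
    obtain ⟨b0', hb0'S, rfl⟩ := Finset.mem_map.mp hb0
    exact G_adj_block2.mpr (hadj b0' hb0'S (e2_lt_iff.mp hlt))

lemma famS_of_mixed {S : Finset (Fin (n + m))} {k : ℕ} (hcard : S.card = k + 2)
    (hC : (Cpart n S).Nonempty) (hZ : (Zpart n S).Nonempty) :
    S ∈ famS ((disjUnionGraph Γ₁ Γ₂)ᶜ) k := by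
  refine ⟨hcard, (Cpart n S).max' hC, ?_, ?_, ?_⟩
  · exact (mem_Cpart.mp ((Cpart n S).max'_mem hC)).1
  · obtain ⟨z, hz⟩ := hZ
    refine ⟨z, (mem_Zpart.mp hz).1, ?_⟩
    rw [Fin.lt_def]
    have h1 := (mem_Cpart.mp ((Cpart n S).max'_mem hC)).2
    have h2 := (mem_Zpart.mp hz).2
    omega
  · intro b hb hlt
    by_cases hbn : (b : ℕ) < n
    · exfalso
      have := (Cpart n S).le_max' b (mem_Cpart.mpr ⟨hb, hbn⟩)
      exact absurd hlt (not_lt.mpr this)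
    · exact G_adj_cross (mem_Cpart.mp ((Cpart n S).max'_mem hC)).2 hbn

lemma pure1_struct {S : Finset (Fin (n + m))} (hZ : Zpart n S = ∅) :
    ∃ S1 : Finset (Fin n), S = S1.map (e1 n m) := by
  classical
  have hall : ∀ x ∈ S, (x : ℕ) < n := by
    intro x hx
    by_contra hxn
    have : x ∈ Zpart n S := mem_Zpart.mpr ⟨hx, hxn⟩
    rw [hZ] at this
    exact absurd this (Finset.notMem_empty x)
  refine ⟨Finset.univ.filter (fun a => e1 n m a ∈ S), ?_⟩
  ext x
  rw [Finset.mem_map]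
  constructor
  · intro hx
    have heq : e1 n m ⟨(x : ℕ), hall x hx⟩ = x := Fin.ext rfl
    exact ⟨⟨(x : ℕ), hall x hx⟩,
      Finset.mem_filter.mpr ⟨Finset.mem_univ _, by rwa [heq]⟩, heq⟩
  · rintro ⟨a, ha, rfl⟩
    exact (Finset.mem_filter.mp ha).2

lemma pure2_struct {S : Finset (Fin (n + m))} (hC : Cpart n S = ∅) :
    ∃ S2 : Finset (Fin m), S = S2.map (e2 n m) := by
  classical
  have hall : ∀ x ∈ S, ¬ (x : ℕ) < n := by
    intro x hx hxn
    have : x ∈ Cpart n S := mem_Cpart.mpr ⟨hx, hxn⟩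
    rw [hC] at this
    exact absurd this (Finset.notMem_empty x)
  refine ⟨Finset.univ.filter (fun a => e2 n m a ∈ S), ?_⟩
  ext x
  rw [Finset.mem_map]
  constructor
  · intro hx
    have hxn := hall x hx
    have hxm : (x : ℕ) - n < m := by have := x.isLt; omega
    have heq : e2 n m ⟨(x : ℕ) - n, hxm⟩ = x := by
      apply Fin.ext
      rw [e2_val]
      simp only []
      omega
    exact ⟨⟨(x : ℕ) - n, hxm⟩,
      Finset.mem_filter.mpr ⟨Finset.mem_univ _, by rwa [heq]⟩, heq⟩
  · rintro ⟨a, ha, rfl⟩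
    exact (Finset.mem_filter.mp ha).2

lemma natPEO_disjUnion (hp1 : natPEO Γ₁) (hp2 : natPEO Γ₂) :
    natPEO (disjUnionGraph Γ₁ Γ₂) := by
  intro i j k hij hik hjk hadj1 hadj2
  rcases hadj1 with ⟨a, b, hab, rfl, rfl⟩ | ⟨a, b, hab, rfl, rfl⟩ <;>
    rcases hadj2 with ⟨a', c, hac, hi, rfl⟩ | ⟨a', c, hac, hi, rfl⟩
  · have haa : a = a' := (e1 n m).injective hi
    subst haa
    refine Or.inl ⟨b, c, ?_, rfl, rfl⟩
    refine hp1 a b c hij hik ?_ hab hac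
    exact fun h => hjk (by rw [h])
  · exfalso
    have h1 := congrArg Fin.val hi
    have h2 := a.isLt
    simp only [Fin.natAdd] at h1
    have h3 : ((Fin.castAdd m a : Fin (n + m)) : ℕ) = (a : ℕ) := rfl
    omega
  · exfalso
    have h1 := congrArg Fin.val hi
    have h2 := a'.isLt
    simp only [Fin.natAdd] at h1
    have h3 : ((Fin.castAdd m a' : Fin (n + m)) : ℕ) = (a' : ℕ) := rfl
    omega
  · have haa : a = a' := (e2 n m).injective hi
    subst haa
    refine Or.inr ⟨b, c, ?_, rfl, rfl⟩
    refine hp2 a b c (e2_lt_iff.mp hij) (e2_lt_iff.mp hik) ?_ hab hac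
    exact fun h => hjk (by rw [h])

end LQAux

namespace LQAux
variable {n m : ℕ} {Γ₁ : SimpleGraph (Fin n)} {Γ₂ : SimpleGraph (Fin m)}

lemma val_lt_of_mem_map1 {S1 : Finset (Fin n)} {x : Fin (n + m)}
    (h : x ∈ S1.map (e1 n m)) : (x : ℕ) < n := by
  obtain ⟨a, _, rfl⟩ := Finset.mem_map.mp h
  exact a.isLt

lemma val_ge_of_mem_map2 {S2 : Finset (Fin m)} {x : Fin (n + m)}
    (h : x ∈ S2.map (e2 n m)) : ¬ (x : ℕ) < n := by
  obtain ⟨a, _, rfl⟩ := Finset.mem_map.mp h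
  rw [e2_val]
  omega

lemma Cpart_map1 (S1 : Finset (Fin n)) : Cpart n (S1.map (e1 n m)) = S1.map (e1 n m) :=
  Finset.filter_true_of_mem (fun x hx => val_lt_of_mem_map1 hx)

lemma Zpart_map1 (S1 : Finset (Fin n)) : Zpart n (S1.map (e1 n m)) = ∅ :=
  Finset.filter_false_of_mem (fun x hx h => h (val_lt_of_mem_map1 hx))

lemma Zpart_map2 (S2 : Finset (Fin m)) : Zpart n (S2.map (e2 n m)) = S2.map (e2 n m) :=
  Finset.filter_true_of_mem (fun x hx => val_ge_of_mem_map2 hx)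

lemma Cpart_map2 (S2 : Finset (Fin m)) : Cpart n (S2.map (e2 n m)) = ∅ :=
  Finset.filter_false_of_mem (fun x hx => val_ge_of_mem_map2 hx)

lemma mix_target_of_pureC {P k : ℕ} {nn : ℕ} {Si : Finset (Fin P)} {v w : Fin P}
    (hcard : Si.card = k + 2) (hv : v ∉ Si) (hvge : ¬ (v : ℕ) < nn)
    (hC : Cpart nn Si = Si) (hw : w ∈ Si) :
    isMixed nn k (insert v (Si.erase w)) := by
  refine ⟨?_, ?_, ?_⟩
  · rw [Finset.card_insert_of_notMem (fun h => hv (Finset.mem_of_mem_erase h)),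
      Finset.card_erase_of_mem hw, hcard]
    omega
  · rw [Cpart_insert_of_ge hvge, Cpart_erase, hC, ← Finset.card_pos,
      Finset.card_erase_of_mem hw, hcard]
    omega
  · rw [Zpart_insert_of_ge hvge]
    exact ⟨v, Finset.mem_insert_self _ _⟩

lemma mix_target_of_pureZ {P k : ℕ} {nn : ℕ} {Si : Finset (Fin P)} {v w : Fin P}
    (hcard : Si.card = k + 2) (hv : v ∉ Si) (hvlt : (v : ℕ) < nn)
    (hZ : Zpart nn Si = Si) (hw : w ∈ Si) :
    isMixed nn k (insert v (Si.erase w)) := by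
  refine ⟨?_, ?_, ?_⟩
  · rw [Finset.card_insert_of_notMem (fun h => hv (Finset.mem_of_mem_erase h)),
      Finset.card_erase_of_mem hw, hcard]
    omega
  · rw [Cpart_insert_of_lt hvlt]
    exact ⟨v, Finset.mem_insert_self _ _⟩
  · rw [Zpart_insert_of_lt hvlt, Zpart_erase, hZ, ← Finset.card_pos,
      Finset.card_erase_of_mem hw, hcard]
    omega

end LQAux

open LQAux

/-- **Proposition 3.4 (Ficarra–Herzog).**  Let `Γ₁` be a chordal graph on `[n]` and `Γ₂` a
chordal graph on `{n+1,…,n+m}` whose natural orders are perfect elimination orders, and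
suppose all homological shift ideals of `I(Γ₁ᶜ)` and of `I(Γ₂ᶜ)` have linear quotients.
Let `Γ` be the disjoint union of `Γ₁` and `Γ₂` and `G = Γᶜ`.  Then the natural order is a
perfect elimination order of `Γ = Gᶜ` and every `HS_k(I(G))` has linear quotients. -/
theorem HS_k_linearQuotients_of_disjoint_union
    {K : Type*} [Field K] {n m : ℕ}
    (Γ₁ : SimpleGraph (Fin n)) (Γ₂ : SimpleGraph (Fin m))
    (hc1 : IsChordal Γ₁) (hc2 : IsChordal Γ₂)
    (hp1 : natPEO Γ₁) (hp2 : natPEO Γ₂)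
    (hHS1 : ∀ k : ℕ, HasLinearQuotients (Ideal.span (HSgens K Γ₁ᶜ k)))
    (hHS2 : ∀ k : ℕ, HasLinearQuotients (Ideal.span (HSgens K Γ₂ᶜ k))) :
    natPEO (disjUnionGraph Γ₁ Γ₂) ∧
    ∀ k : ℕ, HasLinearQuotients (Ideal.span (HSgens K (disjUnionGraph Γ₁ Γ₂)ᶜ k)) := by

  classical
  refine ⟨natPEO_disjUnion hp1 hp2, ?_⟩
  intro k
  obtain ⟨L1, hL1nd, hL1mem, hL1card, hL1hex⟩ := extract (K := K) Γ₁ᶜ k (hHS1 k)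
  obtain ⟨L2, hL2nd, hL2mem, hL2card, hL2hex⟩ := extract (K := K) Γ₂ᶜ k (hHS2 k)
  let mixedF : Finset (Finset (Fin (n + m))) :=
    Finset.univ.filter (fun S => S.card = k + 2 ∧ (Cpart n S).Nonempty ∧ (Zpart n S).Nonempty)
  have hmixedF : ∀ S, S ∈ mixedF ↔ isMixed n k S := by
    intro S
    simp only [mixedF, Finset.mem_filter, Finset.mem_univ, true_and]
    rfl
  let r : Finset (Fin (n + m)) → Finset (Fin (n + m)) → Prop :=
    fun S T => key n S ≤ key n T
  letI : DecidableRel r := fun a b => Nat.decLe _ _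
  letI : IsTrans (Finset (Fin (n + m))) r := ⟨fun _ _ _ hab hbc => le_trans hab hbc⟩
  letI : IsAntisymm (Finset (Fin (n + m))) r := ⟨fun _ _ hab hba => key_inj (le_antisymm hab hba)⟩
  letI : IsTotal (Finset (Fin (n + m))) r := ⟨fun _ _ => le_total _ _⟩
  let Lmix : List (Finset (Fin (n + m))) := mixedF.sort r
  let L1' : List (Finset (Fin (n + m))) := L1.map (Finset.map (e1 n m))
  let L2' : List (Finset (Fin (n + m))) := L2.map (Finset.map (e2 n m))
  let L : List (Finset (Fin (n + m))) := Lmix ++ (L1' ++ L2')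
  have hLmix_mem : ∀ S, S ∈ Lmix ↔ isMixed n k S :=
    fun S => (Finset.mem_sort r).trans (hmixedF S)
  have hlens : L.length = Lmix.length + (L1.length + L2.length) := by
    simp [L, L1', L2']
  have hl1len : L1'.length = L1.length := List.length_map _
  have hl2len : L2'.length = L2.length := List.length_map _
  -- membership of L describes exactly famS
  have hmemL : ∀ S, S ∈ L ↔ S ∈ famS ((disjUnionGraph Γ₁ Γ₂)ᶜ) k := by
    intro S
    constructor
    · intro hS
      rcases List.mem_append.mp hS with hS | hS
      · obtain ⟨h1, h2, h3⟩ := (hLmix_mem S).mp hS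
        exact famS_of_mixed h1 h2 h3
      · rcases List.mem_append.mp hS with hS | hS
        · obtain ⟨S1, hS1, rfl⟩ := List.mem_map.mp hS
          exact famS_map1.mpr ((hL1mem S1).mp hS1)
        · obtain ⟨S2, hS2, rfl⟩ := List.mem_map.mp hS
          exact famS_map2.mpr ((hL2mem S2).mp hS2)
    · intro hS
      by_cases hZ : (Zpart n S).Nonempty
      · by_cases hC : (Cpart n S).Nonempty
        · exact List.mem_append.mpr (Or.inl ((hLmix_mem S).mpr ⟨card_famS hS, hC, hZ⟩))
        · obtain ⟨S2, rfl⟩ := pure2_struct (Finset.not_nonempty_iff_eq_empty.mp hC)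
          refine List.mem_append.mpr (Or.inr (List.mem_append.mpr (Or.inr ?_)))
          exact List.mem_map.mpr ⟨S2, (hL2mem S2).mpr (famS_map2.mp hS), rfl⟩
      · obtain ⟨S1, rfl⟩ := pure1_struct (Finset.not_nonempty_iff_eq_empty.mp hZ)
        refine List.mem_append.mpr (Or.inr (List.mem_append.mpr (Or.inl ?_)))
        exact List.mem_map.mpr ⟨S1, (hL1mem S1).mpr (famS_map1.mp hS), rfl⟩
  -- nodup
  have hnd : L.Nodup := by
    rw [List.nodup_append]
    refine ⟨mixedF.sort_nodup r, ?_, ?_⟩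
    · rw [List.nodup_append]
      refine ⟨hL1nd.map (Finset.map_injective _), hL2nd.map (Finset.map_injective _), ?_⟩
      intro a ha1 b ha2 hab
      subst hab
      obtain ⟨S1, hS1, rfl⟩ := List.mem_map.mp ha1
      obtain ⟨S2, hS2, he⟩ := List.mem_map.mp ha2
      have hcardS1 : (S1.map (e1 n m)).card = k + 2 := by
        rw [Finset.card_map]; exact hL1card S1 hS1
      obtain ⟨x, hx⟩ : (S1.map (e1 n m)).Nonempty := by
        rw [← Finset.card_pos, hcardS1]; omega
      exact val_ge_of_mem_map2 (he ▸ hx) (val_lt_of_mem_map1 hx)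
    · intro a ha b hamem hab
      subst hab
      have hmix := (hLmix_mem a).mp ha
      rcases List.mem_append.mp hamem with h | h
      · obtain ⟨S1, _, rfl⟩ := List.mem_map.mp h
        obtain ⟨z, hz⟩ := hmix.2.2
        rw [Zpart_map1] at hz
        exact absurd hz (Finset.notMem_empty z)
      · obtain ⟨S2, _, rfl⟩ := List.mem_map.mp h
        obtain ⟨c, hc⟩ := hmix.2.1
        rw [Cpart_map2] at hc
        exact absurd hc (Finset.notMem_empty c)
  -- cards
  have hcards : ∀ S ∈ L, S.card = k + 2 := by
    intro S hS
    exact card_famS ((hmemL S).mp hS)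
  -- get lemmas
  have hgetA : ∀ (i : Fin L.length) (h : i.val < Lmix.length),
      L.get i = Lmix.get ⟨i.val, h⟩ := by
    intro i h
    show L[i.val] = Lmix[i.val]
    exact List.getElem_append_left h
  have hgetB : ∀ (i : Fin L.length) (h1 : Lmix.length ≤ i.val)
      (h2 : i.val - Lmix.length < L1.length),
      L.get i = (L1.get ⟨i.val - Lmix.length, h2⟩).map (e1 n m) := by
    intro i h1 h2
    show L[i.val] = _
    rw [List.getElem_append_right h1]
    have h3 : i.val - Lmix.length < L1'.length := by rw [hl1len]; exact h2
    rw [List.getElem_append_left h3]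
    exact List.getElem_map _
  have hgetC : ∀ (i : Fin L.length) (h1 : Lmix.length + L1'.length ≤ i.val)
      (h2 : i.val - Lmix.length - L1'.length < L2.length),
      L.get i = (L2.get ⟨i.val - Lmix.length - L1'.length, h2⟩).map (e2 n m) := by
    intro i h1 h2
    show L[i.val] = _
    rw [List.getElem_append_right (by omega : Lmix.length ≤ i.val)]
    rw [List.getElem_append_right (by omega : L1'.length ≤ i.val - Lmix.length)]
    exact List.getElem_map _
  -- find position of a mixed target
  have hfind : ∀ T' : Finset (Fin (n + m)), isMixed n k T' →
      ∃ q : Fin Lmix.length, Lmix.get q = T' := by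
    intro T' hT'
    exact List.mem_iff_get.mp ((hLmix_mem T').mpr hT')
  have hkey_mono : ∀ q q' : Fin Lmix.length,
      key n (Lmix.get q) < key n (Lmix.get q') → q < q' := by
    intro q q' h
    by_contra hle
    push_neg at hle
    rcases eq_or_lt_of_le hle with heq | hlt
    · rw [heq] at h; omega
    · have hs := List.Pairwise.rel_get_of_lt (mixedF.pairwise_sort r) hlt
      have : key n (Lmix.get q') ≤ key n (Lmix.get q) := hs
      omega
  -- the exchange property
  have hex : ∀ i j : Fin L.length, j < i → ∃ v, v ∈ L.get j ∧ v ∉ L.get i ∧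
      ∃ j' : Fin L.length, j' < i ∧ L.get j' ⊆ insert v (L.get i) := by
    intro i j hij
    have hijv : j.val < i.val := hij
    rcases Nat.lt_or_ge i.val Lmix.length with hi | hi
    · -- i mixed, hence j mixed
      have hj : j.val < Lmix.length := lt_trans hijv hi
      have hqij : (⟨j.val, hj⟩ : Fin Lmix.length) < ⟨i.val, hi⟩ := hijv
      have hmixj : isMixed n k (Lmix.get ⟨j.val, hj⟩) :=
        (hLmix_mem _).mp (List.get_mem _ _)
      have hmixi : isMixed n k (Lmix.get ⟨i.val, hi⟩) :=
        (hLmix_mem _).mp (List.get_mem _ _)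
      have hne : Lmix.get ⟨j.val, hj⟩ ≠ Lmix.get ⟨i.val, hi⟩ := by
        intro h
        have := (mixedF.sort_nodup r).get_inj_iff.mp h
        simp only [Fin.mk.injEq] at this
        omega
      have hkeyle : key n (Lmix.get ⟨j.val, hj⟩) ≤ key n (Lmix.get ⟨i.val, hi⟩) :=
        List.Pairwise.rel_get_of_lt (mixedF.pairwise_sort r) hqij
      have hkeylt : key n (Lmix.get ⟨j.val, hj⟩) < key n (Lmix.get ⟨i.val, hi⟩) := by
        rcases lt_or_eq_of_le hkeyle with h | h
        · exact h
        · exact absurd (key_inj h) hne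
      obtain ⟨v, hvj, hvi, T', hT'mix, hT'key, hT'sub⟩ :=
        mixed_hex hmixj hmixi hne hkeylt
      obtain ⟨q', hq'⟩ := hfind T' hT'mix
      have hq'lt : q' < (⟨i.val, hi⟩ : Fin Lmix.length) := by
        apply hkey_mono
        rw [hq']
        exact hT'key
      have hq'v : (q' : ℕ) < Lmix.length := q'.isLt
      refine ⟨v, ?_, ?_, ⟨q'.val, by omega⟩, ?_, ?_⟩
      · rw [hgetA j hj]; exact hvj
      · rw [hgetA i hi]; exact hvi
      · show (q' : ℕ) < (i : ℕ)
        exact hq'lt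
      · rw [hgetA ⟨q'.val, by omega⟩ q'.isLt, hgetA i hi]
        have : Lmix.get ⟨q'.val, q'.isLt⟩ = T' := by
          rw [← hq']
        rw [this]
        exact hT'sub
    · -- i is in one of the pure regions
      rcases Nat.lt_or_ge (i.val - Lmix.length) L1.length with hi1 | hi1
      · -- i pure1
        have hSi := hgetB i hi hi1
        have hSicard : (L1.get ⟨i.val - Lmix.length, hi1⟩).map (e1 n m) ∈ L := by
          rw [← hSi]; exact List.get_mem _ _
        rcases Nat.lt_or_ge j.val Lmix.length with hj | hj
        · -- j mixed
          have hmixj : isMixed n k (Lmix.get ⟨j.val, hj⟩) :=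
            (hLmix_mem _).mp (List.get_mem _ _)
          obtain ⟨v, hv⟩ := hmixj.2.2
          have hvSj : v ∈ Lmix.get ⟨j.val, hj⟩ := (mem_Zpart.mp hv).1
          have hvge : ¬ (v : ℕ) < n := (mem_Zpart.mp hv).2
          have hvSi : v ∉ (L1.get ⟨i.val - Lmix.length, hi1⟩).map (e1 n m) :=
            fun h => hvge (val_lt_of_mem_map1 h)
          have hScard : ((L1.get ⟨i.val - Lmix.length, hi1⟩).map (e1 n m)).card = k + 2 := by
            rw [Finset.card_map]
            exact hL1card _ (List.get_mem _ _)
          obtain ⟨w, hw⟩ : ((L1.get ⟨i.val - Lmix.length, hi1⟩).map (e1 n m)).Nonempty := by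
            rw [← Finset.card_pos, hScard]; omega
          have hT'mix := mix_target_of_pureC hScard hvSi hvge (Cpart_map1 _) hw
          obtain ⟨q', hq'⟩ := hfind _ hT'mix
          have hq'v : (q' : ℕ) < Lmix.length := q'.isLt
          refine ⟨v, ?_, ?_, ⟨q'.val, by omega⟩, by show (q' : ℕ) < (i : ℕ); omega, ?_⟩
          · rw [hgetA j hj]; exact hvSj
          · rw [hSi]; exact hvSi
          · rw [hgetA ⟨q'.val, by omega⟩ q'.isLt, hSi]
            have : Lmix.get ⟨q'.val, q'.isLt⟩ = insert v (((L1.get ⟨i.val - Lmix.length, hi1⟩).map (e1 n m)).erase w) := by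
              rw [← hq']
            rw [this]
            exact Finset.insert_subset_insert v (Finset.erase_subset _ _)
        · -- j pure1
          have hj1 : j.val - Lmix.length < L1.length := by omega
          have hSj := hgetB j hj hj1
          have hblt : (⟨j.val - Lmix.length, hj1⟩ : Fin L1.length) <
              ⟨i.val - Lmix.length, hi1⟩ := by
            show j.val - Lmix.length < i.val - Lmix.length
            omega
          obtain ⟨v', hv'j, hv'i, j1', hj1'lt, hsub⟩ :=
            hL1hex ⟨i.val - Lmix.length, hi1⟩ ⟨j.val - Lmix.length, hj1⟩ hblt
          have hj1'v : (j1' : ℕ) < i.val - Lmix.length := hj1'lt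
          have hj1'b : (j1' : ℕ) < L1.length := j1'.isLt
          have hj'lt : Lmix.length + (j1' : ℕ) < L.length := by omega
          have hgetj' : L.get ⟨Lmix.length + (j1' : ℕ), hj'lt⟩ = (L1.get j1').map (e1 n m) := by
            have h1 : Lmix.length ≤ Lmix.length + (j1' : ℕ) := by omega
            have h2 : Lmix.length + (j1' : ℕ) - Lmix.length < L1.length := by omega
            rw [hgetB ⟨Lmix.length + (j1' : ℕ), hj'lt⟩ h1 h2,
              show (⟨Lmix.length + (j1' : ℕ) - Lmix.length, h2⟩ : Fin L1.length) = j1' from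
                Fin.ext (by show Lmix.length + (j1' : ℕ) - Lmix.length = (j1' : ℕ); omega)]
          refine ⟨e1 n m v', ?_, ?_, ⟨Lmix.length + (j1' : ℕ), hj'lt⟩,
            by show Lmix.length + (j1' : ℕ) < (i : ℕ); omega, ?_⟩
          · rw [hSj]; exact Finset.mem_map_of_mem _ hv'j
          · rw [hSi]
            exact fun h => hv'i ((Finset.mem_map' _).mp h)
          · rw [hgetj', hSi, ← Finset.map_insert]
            exact Finset.map_subset_map.mpr hsub
      · -- i pure2
        have hi2 : i.val - Lmix.length - L1'.length < L2.length := by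
          have hib := i.isLt
          omega
        have hSi := hgetC i (by omega) hi2
        have hScard : ((L2.get ⟨i.val - Lmix.length - L1'.length, hi2⟩).map (e2 n m)).card = k + 2 := by
          rw [Finset.card_map]
          exact hL2card _ (List.get_mem _ _)
        have hSine : ((L2.get ⟨i.val - Lmix.length - L1'.length, hi2⟩).map (e2 n m)).Nonempty := by
          rw [← Finset.card_pos, hScard]; omega
        rcases Nat.lt_or_ge j.val Lmix.length with hj | hj
        · -- j mixed
          have hmixj : isMixed n k (Lmix.get ⟨j.val, hj⟩) :=
            (hLmix_mem _).mp (List.get_mem _ _)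
          obtain ⟨v, hv⟩ := hmixj.2.1
          have hvSj : v ∈ Lmix.get ⟨j.val, hj⟩ := (mem_Cpart.mp hv).1
          have hvlt : (v : ℕ) < n := (mem_Cpart.mp hv).2
          have hvSi : v ∉ (L2.get ⟨i.val - Lmix.length - L1'.length, hi2⟩).map (e2 n m) :=
            fun h => (val_ge_of_mem_map2 h) hvlt
          obtain ⟨w, hw⟩ := hSine
          have hT'mix := mix_target_of_pureZ hScard hvSi hvlt (Zpart_map2 _) hw
          obtain ⟨q', hq'⟩ := hfind _ hT'mix
          have hq'v : (q' : ℕ) < Lmix.length := q'.isLt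
          refine ⟨v, ?_, ?_, ⟨q'.val, by omega⟩, by show (q' : ℕ) < (i : ℕ); omega, ?_⟩
          · rw [hgetA j hj]; exact hvSj
          · rw [hSi]; exact hvSi
          · rw [hgetA ⟨q'.val, by omega⟩ q'.isLt, hSi]
            have : Lmix.get ⟨q'.val, q'.isLt⟩ = insert v (((L2.get ⟨i.val - Lmix.length - L1'.length, hi2⟩).map (e2 n m)).erase w) := by
              rw [← hq']
            rw [this]
            exact Finset.insert_subset_insert v (Finset.erase_subset _ _)
        · rcases Nat.lt_or_ge (j.val - Lmix.length) L1.length with hj1 | hj1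
          · -- j pure1
            have hSj := hgetB j hj hj1
            have hSjcard : ((L1.get ⟨j.val - Lmix.length, hj1⟩).map (e1 n m)).card = k + 2 := by
              rw [Finset.card_map]
              exact hL1card _ (List.get_mem _ _)
            obtain ⟨v, hvSj⟩ : ((L1.get ⟨j.val - Lmix.length, hj1⟩).map (e1 n m)).Nonempty := by
              rw [← Finset.card_pos, hSjcard]; omega
            have hvlt : (v : ℕ) < n := val_lt_of_mem_map1 hvSj
            have hvSi : v ∉ (L2.get ⟨i.val - Lmix.length - L1'.length, hi2⟩).map (e2 n m) :=
              fun h => (val_ge_of_mem_map2 h) hvlt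
            obtain ⟨w, hw⟩ := hSine
            have hT'mix := mix_target_of_pureZ hScard hvSi hvlt (Zpart_map2 _) hw
            obtain ⟨q', hq'⟩ := hfind _ hT'mix
            have hq'v : (q' : ℕ) < Lmix.length := q'.isLt
            refine ⟨v, ?_, ?_, ⟨q'.val, by omega⟩, by show (q' : ℕ) < (i : ℕ); omega, ?_⟩
            · rw [hSj]; exact hvSj
            · rw [hSi]; exact hvSi
            · rw [hgetA ⟨q'.val, by omega⟩ q'.isLt, hSi]
              have : Lmix.get ⟨q'.val, q'.isLt⟩ = insert v (((L2.get ⟨i.val - Lmix.length - L1'.length, hi2⟩).map (e2 n m)).erase w) := by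
                rw [← hq']
              rw [this]
              exact Finset.insert_subset_insert v (Finset.erase_subset _ _)
          · -- j pure2
            have hj2 : j.val - Lmix.length - L1'.length < L2.length := by omega
            have hSj := hgetC j (by omega) hj2
            have hblt : (⟨j.val - Lmix.length - L1'.length, hj2⟩ : Fin L2.length) <
                ⟨i.val - Lmix.length - L1'.length, hi2⟩ := by
              show j.val - Lmix.length - L1'.length < i.val - Lmix.length - L1'.length
              omega
            obtain ⟨v', hv'j, hv'i, j2', hj2'lt, hsub⟩ :=
              hL2hex ⟨i.val - Lmix.length - L1'.length, hi2⟩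
                ⟨j.val - Lmix.length - L1'.length, hj2⟩ hblt
            have hj2'v : (j2' : ℕ) < i.val - Lmix.length - L1'.length := hj2'lt
            have hj2'b : (j2' : ℕ) < L2.length := j2'.isLt
            have hj'lt : Lmix.length + L1'.length + (j2' : ℕ) < L.length := by
              rw [hlens]; omega
            have hgetj' : L.get ⟨Lmix.length + L1'.length + (j2' : ℕ), hj'lt⟩
                = (L2.get j2').map (e2 n m) := by
              have h1 : Lmix.length + L1'.length ≤ Lmix.length + L1'.length + (j2' : ℕ) := by
                omega
              have h2 : Lmix.length + L1'.length + (j2' : ℕ) - Lmix.length - L1'.length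
                  < L2.length := by omega
              rw [hgetC ⟨Lmix.length + L1'.length + (j2' : ℕ), hj'lt⟩ h1 h2,
                show (⟨Lmix.length + L1'.length + (j2' : ℕ) - Lmix.length - L1'.length, h2⟩ :
                    Fin L2.length) = j2' from
                  Fin.ext (by
                    show Lmix.length + L1'.length + (j2' : ℕ) - Lmix.length - L1'.length
                      = (j2' : ℕ)
                    omega)]
            refine ⟨e2 n m v', ?_, ?_, ⟨Lmix.length + L1'.length + (j2' : ℕ), hj'lt⟩,
              by show Lmix.length + L1'.length + (j2' : ℕ) < (i : ℕ); omega, ?_⟩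
            · rw [hSj]; exact Finset.mem_map_of_mem _ hv'j
            · rw [hSi]
              exact fun h => hv'i ((Finset.mem_map' _).mp h)
            · rw [hgetj', hSi, ← Finset.map_insert]
              exact Finset.map_subset_map.mpr hsub
  have hmain := hasLQ_of_list (K := K) (k + 2) L hnd hcards hex
  have hsetEq : {S : Finset (Fin (n + m)) | S ∈ L} = famS ((disjUnionGraph Γ₁ Γ₂)ᶜ) k := by
    ext S
    exact hmemL S
  rw [HSgens_eq, ← hsetEq]
  exact hmain
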